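/- arXiv:2105.02796 — 3 statements merged into one kernel-verified Lean document; each statement's English description precedes it below -/
import Mathlib

section
/- Let N be a positive integer, let K and K̃ be N×N real symmetric positive semidefinite matrices whose entries satisfy |K̃ᵢⱼ − Kᵢⱼ| ≤ ε̃ for all indices i, j, where ε̃ ≥ 0, and let λ > 0. Then log det(K̃ + λI) ≤ log det(K + (N·ε̃ + λ)·I). -/
open Matrix MeasureTheory

/-- Operator norm of an `N × N` real matrix induced by the Euclidean norm on `ℝ^N`. -/
noncomputable def opNorm {N : ℕ} (M : Matrix (Fin N) (Fin N) ℝ) : ℝ :=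
  ‖Matrix.toEuclideanCLM (𝕜 := ℝ) M‖

/-- Euclidean norm of a vector in `ℝ^N`. -/
noncomputable def evnorm {N : ℕ} (v : Fin N → ℝ) : ℝ :=
  Real.sqrt (∑ i, (v i) ^ 2)


open Matrix

variable {n : Type*} [Fintype n] [DecidableEq n]

lemma one_le_det_one_add {M : Matrix n n ℝ} (hM : M.PosSemidef) :
    1 ≤ (1 + M).det := by
  have hH := hM.1
  have hspec := hH.spectral_theorem
  set U := (hH.eigenvectorUnitary : Matrix n n ℝ) with hUdef
  have hU : U * star U = 1 := (Matrix.mem_unitaryGroup_iff).mp hH.eigenvectorUnitary.2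
  have h1 : (1 : Matrix n n ℝ) + M
      = U * (1 + diagonal (RCLike.ofReal ∘ hH.eigenvalues)) * star U := by
    rw [mul_add, add_mul, mul_one, hU]
    exact congrArg (1 + ·) hspec
  rw [h1, det_mul_right_comm, hU, one_mul]
  have : (1 : Matrix n n ℝ) + diagonal (RCLike.ofReal ∘ hH.eigenvalues)
      = diagonal (fun i => 1 + hH.eigenvalues i) := by
    rw [← diagonal_one, diagonal_add]
    congr 1
  rw [this, det_diagonal]
  calc (1:ℝ) = ∏ _i : n, 1 := by simp
    _ ≤ ∏ i, (1 + hH.eigenvalues i) :=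
        Finset.prod_le_prod (fun i _ => by norm_num)
          (fun i _ => by linarith [hM.eigenvalues_nonneg i])

lemma det_le_det_add_psd {A C : Matrix n n ℝ} (hA : A.PosDef) (hC : C.PosSemidef) :
    A.det ≤ (A + C).det := by
  obtain ⟨S, hSS, hSH⟩ : ∃ S : Matrix n n ℝ, S * S = A ∧ Sᴴ = S := by
    open scoped MatrixOrder in
    exact ⟨CFC.sqrt A, CFC.sqrt_mul_sqrt_self A hA.posSemidef.nonneg,
      (CFC.sqrt_nonneg A).posSemidef.1⟩
  have hdetA : 0 < A.det := hA.det_pos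
  have hdetS : IsUnit S.det := by
    have : S.det * S.det = A.det := by rw [← det_mul, hSS]
    have hne : S.det ≠ 0 := fun h => by simp [h] at this; linarith
    exact hne.isUnit
  have h1 : S * S⁻¹ = 1 := mul_nonsing_inv _ hdetS
  have h2 : S⁻¹ * S = 1 := nonsing_inv_mul _ hdetS
  have hinvH : (S⁻¹)ᴴ = S⁻¹ := by rw [conjTranspose_nonsing_inv, hSH]
  have hMpsd : (S⁻¹ * C * S⁻¹).PosSemidef := by
    have := hC.conjTranspose_mul_mul_same S⁻¹
    rwa [hinvH] at this
  have hfact : A + C = S * (1 + S⁻¹ * C * S⁻¹) * S := by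
    rw [mul_add, mul_one, add_mul, hSS]
    have : S * (S⁻¹ * C * S⁻¹) * S = (S * S⁻¹) * C * (S⁻¹ * S) := by
      simp only [Matrix.mul_assoc]
    rw [this, h1, h2, one_mul, mul_one]
  rw [hfact, det_mul, det_mul]
  have hd2 : S.det * S.det = A.det := by rw [← det_mul, hSS]
  calc A.det = (S.det * S.det) * 1 := by rw [hd2, mul_one]
    _ ≤ (S.det * S.det) * (1 + S⁻¹ * C * S⁻¹).det := by
        apply mul_le_mul_of_nonneg_left (one_le_det_one_add hMpsd) (by rw [hd2]; linarith)
    _ = S.det * (1 + S⁻¹ * C * S⁻¹).det * S.det := by ring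

lemma real_posSemidef_of_symm {M : Matrix n n ℝ} (hs : M.IsSymm)
    (h : ∀ v : n → ℝ, 0 ≤ v ⬝ᵥ M *ᵥ v) : M.PosSemidef := by
  refine PosSemidef.of_dotProduct_mulVec_nonneg ?_ fun x => by simpa using h x
  rwa [Matrix.IsHermitian, conjTranspose_eq_transpose_of_trivial]

theorem stmt_5 {N : ℕ} (hN : 0 < N) (K Kt : Matrix (Fin N) (Fin N) ℝ)
    (hKsymm : K.IsSymm) (hKtsymm : Kt.IsSymm)
    (hKpsd : ∀ v : Fin N → ℝ, 0 ≤ v ⬝ᵥ K *ᵥ v)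
    (hKtpsd : ∀ v : Fin N → ℝ, 0 ≤ v ⬝ᵥ Kt *ᵥ v)
    (ε : ℝ) (hε : 0 ≤ ε) (hentry : ∀ i j, |Kt i j - K i j| ≤ ε)
    (lam : ℝ) (hlam : 0 < lam) :
    Real.log (Kt + lam • 1).det ≤ Real.log (K + (N * ε + lam) • 1).det := by
  have hKtPSD : Kt.PosSemidef := real_posSemidef_of_symm hKtsymm hKtpsd
  have hlam1 : (lam • (1 : Matrix (Fin N) (Fin N) ℝ)).PosDef := by
    rw [smul_one_eq_diagonal]
    exact Matrix.PosDef.diagonal (fun _ => hlam)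
  have hA : (Kt + lam • (1 : Matrix (Fin N) (Fin N) ℝ)).PosDef :=
    Matrix.PosDef.posSemidef_add hKtPSD hlam1
  -- the difference matrix
  set C : Matrix (Fin N) (Fin N) ℝ := (K - Kt) + ((N : ℝ) * ε) • 1 with hCdef
  have hCsymm : C.IsSymm := by
    apply Matrix.IsSymm.add
    · exact hKsymm.sub hKtsymm
    · exact (Matrix.isSymm_one).smul _
  have hCpsd : C.PosSemidef := by
    apply real_posSemidef_of_symm hCsymm
    intro v
    have hquad : v ⬝ᵥ C *ᵥ v = v ⬝ᵥ (K - Kt) *ᵥ v + (N * ε) * ∑ i, v i ^ 2 := by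
      simp only [hCdef, add_mulVec, smul_mulVec, dotProduct, Pi.add_apply,
        Pi.smul_apply, one_mulVec, smul_eq_mul, mul_add, Finset.sum_add_distrib, sq,
        Finset.mul_sum]
      congr 1
      exact Finset.sum_congr rfl fun i _ => by ring
    have hbound : |v ⬝ᵥ (K - Kt) *ᵥ v| ≤ (N * ε) * ∑ i, v i ^ 2 := by
      have h1 : v ⬝ᵥ (K - Kt) *ᵥ v = ∑ i, ∑ j, v i * ((K i j - Kt i j) * v j) := by
        simp [dotProduct, mulVec, Finset.mul_sum, Matrix.sub_apply]
      rw [h1]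
      calc |∑ i, ∑ j, v i * ((K i j - Kt i j) * v j)|
          ≤ ∑ i, |∑ j, v i * ((K i j - Kt i j) * v j)| := Finset.abs_sum_le_sum_abs _ _
        _ ≤ ∑ i, ∑ j, |v i * ((K i j - Kt i j) * v j)| :=
            Finset.sum_le_sum fun i _ => Finset.abs_sum_le_sum_abs _ _
        _ ≤ ∑ i, ∑ j, |v i| * (ε * |v j|) := by
            refine Finset.sum_le_sum fun i _ => Finset.sum_le_sum fun j _ => ?_
            rw [abs_mul, abs_mul]
            have hij : |K i j - Kt i j| ≤ ε := by
              rw [abs_sub_comm]; exact hentry i j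
            exact mul_le_mul_of_nonneg_left
              (mul_le_mul_of_nonneg_right hij (abs_nonneg _)) (abs_nonneg _)
        _ = ε * (∑ i, |v i|) ^ 2 := by
            simp only [← Finset.mul_sum, ← Finset.sum_mul, sq]; ring
        _ ≤ ε * ((N : ℝ) * ∑ i, |v i| ^ 2) := by
            apply mul_le_mul_of_nonneg_left _ hε
            have := sq_sum_le_card_mul_sum_sq (s := (Finset.univ : Finset (Fin N)))
              (f := fun i => |v i|)
            simpa using this
        _ = (N * ε) * ∑ i, v i ^ 2 := by
            simp only [sq_abs]; ring
    rw [hquad]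
    linarith [abs_le.mp hbound]
  have hsplit : K + ((N : ℝ) * ε + lam) • (1 : Matrix (Fin N) (Fin N) ℝ)
      = (Kt + lam • 1) + C := by
    rw [hCdef, add_smul]; abel
  have hdetle : (Kt + lam • (1 : Matrix (Fin N) (Fin N) ℝ)).det
      ≤ (K + ((N : ℝ) * ε + lam) • (1 : Matrix (Fin N) (Fin N) ℝ)).det := by
    rw [hsplit]
    exact det_le_det_add_psd hA hCpsd
  exact Real.log_le_log hA.det_pos hdetle
end

section
/- Let N be a positive integer, let K and K̃ be N×N real symmetric positive semidefinite matrices, let λ > 0, let ε̃ ≥ 0, let k, k̃ ∈ ℝ^N be vectors satisfying |k̃ᵢ − kᵢ| ≤ ε̃ for every index i, and let c, c̃ ∈ ℝ satisfy |c − c̃| ≤ ε̃. Define the posterior variances σ² := c − kᵀ(K + λI)⁻¹ k and σ̃² := c̃ − k̃ᵀ(K̃ + λI)⁻¹ k̃. Then |σ² − σ̃²| ≤ S², where S² := ε̃ + √N·ε̃·‖(K + λI)⁻¹ k‖ + (√N·ε̃ + ‖k‖)·C and C := (1/λ + ‖(K + λI)⁻¹‖)·(‖k‖ + √N·ε̃)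 + ‖(K + λI)⁻¹‖·√N·ε̃. -/
open Matrix MeasureTheory

/-- The constant `C = (1/λ + ‖(K+λI)⁻¹‖)(‖k‖ + √N ε̃) + ‖(K+λI)⁻¹‖ √N ε̃`. -/
noncomputable def Cbound {N : ℕ} (K : Matrix (Fin N) (Fin N) ℝ) (k : Fin N → ℝ)
    (lam ε : ℝ) : ℝ :=
  (1 / lam + opNorm (K + lam • 1)⁻¹) * (evnorm k + Real.sqrt N * ε) +
    opNorm (K + lam • 1)⁻¹ * (Real.sqrt N * ε)

/-- The constant `S² = ε̃ + √N ε̃ ‖(K+λI)⁻¹ k‖ + (√N ε̃ + ‖k‖) C`. -/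
noncomputable def Ssq {N : ℕ} (K : Matrix (Fin N) (Fin N) ℝ) (k : Fin N → ℝ)
    (lam ε : ℝ) : ℝ :=
  ε + Real.sqrt N * ε * evnorm ((K + lam • 1)⁻¹ *ᵥ k) +
    (Real.sqrt N * ε + evnorm k) * Cbound K k lam ε

/- ## Auxiliary lemmas -/

lemma evnorm_eq {N : ℕ} (v : Fin N → ℝ) :
    evnorm v = ‖(WithLp.equiv 2 (Fin N → ℝ)).symm v‖ := by
  simp [evnorm, EuclideanSpace.norm_eq, Real.norm_eq_abs, sq_abs]

lemma evnorm_nonneg {N : ℕ} (v : Fin N → ℝ) : 0 ≤ evnorm v := Real.sqrt_nonneg _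

lemma abs_dot_le {N : ℕ} (v w : Fin N → ℝ) : |v ⬝ᵥ w| ≤ evnorm v * evnorm w := by
  have h : v ⬝ᵥ w = @inner ℝ _ _ ((WithLp.equiv 2 (Fin N → ℝ)).symm v)
      ((WithLp.equiv 2 (Fin N → ℝ)).symm w) := by
    simp [dotProduct, PiLp.inner_apply, RCLike.inner_apply]
    exact Finset.sum_congr rfl fun i _ => mul_comm _ _
  rw [h, evnorm_eq, evnorm_eq]
  exact abs_real_inner_le_norm _ _

lemma evnorm_mulVec_le {N : ℕ} (M : Matrix (Fin N) (Fin N) ℝ) (v : Fin N → ℝ) :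
    evnorm (M *ᵥ v) ≤ opNorm M * evnorm v := by
  have h : (WithLp.equiv 2 (Fin N → ℝ)).symm (M *ᵥ v) =
      Matrix.toEuclideanCLM (𝕜 := ℝ) M ((WithLp.equiv 2 (Fin N → ℝ)).symm v) := by
    rfl
  rw [evnorm_eq, evnorm_eq, h]
  exact ContinuousLinearMap.le_opNorm _ _

lemma evnorm_add_le {N : ℕ} (v w : Fin N → ℝ) :
    evnorm (v + w) ≤ evnorm v + evnorm w := by
  rw [evnorm_eq, evnorm_eq, evnorm_eq, show (WithLp.equiv 2 (Fin N → ℝ)).symm (v + w) = (WithLp.equiv 2 (Fin N → ℝ)).symm v + (WithLp.equiv 2 (Fin N → ℝ)).symm w from rfl]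
  exact norm_add_le _ _

lemma evnorm_sub_le {N : ℕ} (v w : Fin N → ℝ) :
    evnorm (v - w) ≤ evnorm v + evnorm w := by
  rw [evnorm_eq, evnorm_eq, evnorm_eq, show (WithLp.equiv 2 (Fin N → ℝ)).symm (v - w) = (WithLp.equiv 2 (Fin N → ℝ)).symm v - (WithLp.equiv 2 (Fin N → ℝ)).symm w from rfl]
  exact norm_sub_le _ _

lemma evnorm_le_of_abs_le {N : ℕ} {v : Fin N → ℝ} {ε : ℝ} (hε : 0 ≤ ε)
    (h : ∀ i, |v i| ≤ ε) : evnorm v ≤ Real.sqrt N * ε := by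
  have h1 : ∑ i, (v i) ^ 2 ≤ (N : ℝ) * ε ^ 2 := by
    calc ∑ i, (v i) ^ 2 ≤ ∑ _i : Fin N, ε ^ 2 := by
          refine Finset.sum_le_sum fun i _ => ?_
          rw [← sq_abs]
          exact pow_le_pow_left₀ (abs_nonneg _) (h i) 2
      _ = (N : ℝ) * ε ^ 2 := by simp [mul_comm]
  calc evnorm v ≤ Real.sqrt ((N : ℝ) * ε ^ 2) := Real.sqrt_le_sqrt h1
    _ = Real.sqrt N * ε := by
        rw [Real.sqrt_mul (Nat.cast_nonneg N), Real.sqrt_sq hε]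

lemma shift_dot_bound {N : ℕ} (K : Matrix (Fin N) (Fin N) ℝ)
    (hKpsd : ∀ v : Fin N → ℝ, 0 ≤ v ⬝ᵥ K *ᵥ v) {lam : ℝ} (v : Fin N → ℝ) :
    lam * (v ⬝ᵥ v) ≤ v ⬝ᵥ (K + lam • 1) *ᵥ v := by
  rw [add_mulVec, smul_mulVec, one_mulVec, dotProduct_add, dotProduct_smul]
  simp only [smul_eq_mul]
  linarith [hKpsd v]

lemma posdef_shift {N : ℕ} (K : Matrix (Fin N) (Fin N) ℝ) (hKsymm : K.IsSymm)
    (hKpsd : ∀ v : Fin N → ℝ, 0 ≤ v ⬝ᵥ K *ᵥ v) {lam : ℝ} (hlam : 0 < lam) :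
    (K + lam • 1).PosDef := by
  rw [posDef_iff_dotProduct_mulVec]
  constructor
  · have hK : Kᴴ = K := by
      rw [conjTranspose_eq_transpose_of_trivial]
      exact hKsymm.eq
    rw [Matrix.IsHermitian, conjTranspose_add, conjTranspose_smul, hK]
    simp [star_trivial]
  · intro x hx
    have hnn : 0 ≤ x ⬝ᵥ x := Finset.sum_nonneg fun i _ => mul_self_nonneg _
    have h2 : 0 < x ⬝ᵥ x :=
      lt_of_le_of_ne hnn (Ne.symm (fun h => hx (dotProduct_self_eq_zero.mp h)))
    have h3 : (0:ℝ) < lam * (x ⬝ᵥ x) := mul_pos hlam h2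
    rw [star_trivial]
    calc (0:ℝ) < lam * (x ⬝ᵥ x) := h3
      _ ≤ x ⬝ᵥ (K + lam • 1) *ᵥ x := shift_dot_bound K hKpsd x

lemma opNorm_inv_le {N : ℕ} {M : Matrix (Fin N) (Fin N) ℝ} (hM : M.PosDef)
    {lam : ℝ} (hlam : 0 < lam)
    (hbound : ∀ v : Fin N → ℝ, lam * (v ⬝ᵥ v) ≤ v ⬝ᵥ M *ᵥ v) :
    opNorm M⁻¹ ≤ 1 / lam := by
  have hMM : M * M⁻¹ = 1 := mul_nonsing_inv _ hM.det_pos.ne'.isUnit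
  refine ContinuousLinearMap.opNorm_le_bound _ (by positivity) fun y => ?_
  set T := Matrix.toEuclideanCLM (𝕜 := ℝ) (n := Fin N)
  set x := T M⁻¹ y with hxdef
  have hx : T M x = y := by
    have : T M * T M⁻¹ = 1 := by rw [← _root_.map_mul, hMM, _root_.map_one]
    calc T M (T M⁻¹ y) = (T M * T M⁻¹) y := rfl
    _ = y := by rw [this]; rfl
  set v : Fin N → ℝ := WithLp.equiv 2 (Fin N → ℝ) x with hv
  have hxv : x = (WithLp.equiv 2 (Fin N → ℝ)).symm v := rfl
  have hMx : T M x = (WithLp.equiv 2 (Fin N → ℝ)).symm (M *ᵥ v) := by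
    rw [hxv]; rfl
  have hinner1 : (v ⬝ᵥ v : ℝ) = ‖x‖ ^ 2 := by
    rw [hxv, ← real_inner_self_eq_norm_sq]
    simp [dotProduct, PiLp.inner_apply, RCLike.inner_apply]
    rw [EuclideanSpace.norm_eq, Real.sq_sqrt (Finset.sum_nonneg fun i _ => sq_nonneg _)]
    simp [sq]
  have hinner2 : (v ⬝ᵥ M *ᵥ v : ℝ) = @inner ℝ _ _ x (T M x) := by
    rw [hMx, hxv]
    simp [dotProduct, PiLp.inner_apply, RCLike.inner_apply]
    exact Finset.sum_congr rfl fun i _ => mul_comm _ _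
  have h1 : lam * ‖x‖ ^ 2 ≤ ‖x‖ * ‖y‖ := by
    calc lam * ‖x‖ ^ 2 = lam * (v ⬝ᵥ v) := by rw [hinner1]
    _ ≤ v ⬝ᵥ M *ᵥ v := hbound v
    _ = @inner ℝ _ _ x (T M x) := hinner2
    _ ≤ ‖x‖ * ‖T M x‖ := real_inner_le_norm _ _
    _ = ‖x‖ * ‖y‖ := by rw [hx]
  rcases eq_or_lt_of_le (norm_nonneg x) with h0 | h0
  · rw [← h0]; positivity
  · have := norm_nonneg y
    rw [div_mul_eq_mul_div, le_div_iff₀ hlam]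
    nlinarith

lemma opNorm_nonneg {N : ℕ} (M : Matrix (Fin N) (Fin N) ℝ) : 0 ≤ opNorm M :=
  norm_nonneg _

theorem stmt_7 {N : ℕ} (hN : 0 < N) (K Kt : Matrix (Fin N) (Fin N) ℝ)
    (hKsymm : K.IsSymm) (hKtsymm : Kt.IsSymm)
    (hKpsd : ∀ v : Fin N → ℝ, 0 ≤ v ⬝ᵥ K *ᵥ v)
    (hKtpsd : ∀ v : Fin N → ℝ, 0 ≤ v ⬝ᵥ Kt *ᵥ v)
    (lam : ℝ) (hlam : 0 < lam) (ε : ℝ) (hε : 0 ≤ ε)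
    (k kt : Fin N → ℝ) (hk : ∀ i, |kt i - k i| ≤ ε)
    (c ct : ℝ) (hc : |c - ct| ≤ ε) :
    |(c - k ⬝ᵥ ((K + lam • 1)⁻¹ *ᵥ k)) - (ct - kt ⬝ᵥ ((Kt + lam • 1)⁻¹ *ᵥ kt))| ≤
      Ssq K k lam ε := by
  set A := (K + lam • 1)⁻¹ with hA
  set At := (Kt + lam • 1)⁻¹ with hAt
  set a := A *ᵥ k with ha
  set b := At *ᵥ kt with hb
  set d : Fin N → ℝ := kt - k with hd
  have hdi : ∀ i, |d i| ≤ ε := fun i => hk i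
  -- norms
  have hsN : (0:ℝ) ≤ Real.sqrt N * ε := mul_nonneg (Real.sqrt_nonneg _) hε
  have hnd : evnorm d ≤ Real.sqrt N * ε := evnorm_le_of_abs_le hε hdi
  have hktk : kt = k + d := by funext i; simp [hd]
  have hnkt : evnorm kt ≤ evnorm k + Real.sqrt N * ε := by
    rw [hktk]
    exact (evnorm_add_le k d).trans (by linarith)
  have hna : evnorm a ≤ opNorm A * evnorm k := evnorm_mulVec_le A k
  have hAtle : opNorm At ≤ 1 / lam :=
    opNorm_inv_le (posdef_shift Kt hKtsymm hKtpsd hlam) hlam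
      (fun v => shift_dot_bound Kt hKtpsd v)
  have hnb : evnorm b ≤ (1 / lam) * (evnorm k + Real.sqrt N * ε) := by
    calc evnorm b ≤ opNorm At * evnorm kt := evnorm_mulVec_le At kt
      _ ≤ (1 / lam) * (evnorm k + Real.sqrt N * ε) := by
          apply mul_le_mul hAtle hnkt (evnorm_nonneg _)
          positivity
  -- decomposition
  have key : (c - k ⬝ᵥ a) - (ct - kt ⬝ᵥ b) = (c - ct) + d ⬝ᵥ a - kt ⬝ᵥ (a - b) := by
    have h1 : d ⬝ᵥ a = kt ⬝ᵥ a - k ⬝ᵥ a := by rw [hd, sub_dotProduct]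
    have h2 : kt ⬝ᵥ (a - b) = kt ⬝ᵥ a - kt ⬝ᵥ b := by rw [dotProduct_sub]
    rw [h1, h2]; ring
  rw [key]
  have habs : |(c - ct) + d ⬝ᵥ a - kt ⬝ᵥ (a - b)| ≤
      |c - ct| + |d ⬝ᵥ a| + |kt ⬝ᵥ (a - b)| := by
    calc |(c - ct) + d ⬝ᵥ a - kt ⬝ᵥ (a - b)|
        ≤ |(c - ct) + d ⬝ᵥ a| + |kt ⬝ᵥ (a - b)| := abs_sub _ _
      _ ≤ |c - ct| + |d ⬝ᵥ a| + |kt ⬝ᵥ (a - b)| := by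
          linarith [abs_add_le (c - ct) (d ⬝ᵥ a)]
  have hd1 : |d ⬝ᵥ a| ≤ Real.sqrt N * ε * evnorm a := by
    calc |d ⬝ᵥ a| ≤ evnorm d * evnorm a := abs_dot_le d a
      _ ≤ Real.sqrt N * ε * evnorm a :=
          mul_le_mul_of_nonneg_right hnd (evnorm_nonneg _)
  have hd2 : |kt ⬝ᵥ (a - b)| ≤ (Real.sqrt N * ε + evnorm k) * Cbound K k lam ε := by
    have hCb : evnorm a + evnorm b ≤ Cbound K k lam ε := by
      have h3 : (0:ℝ) ≤ opNorm A * (Real.sqrt N * ε) :=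
        mul_nonneg (opNorm_nonneg A) hsN
      simp only [Cbound, ← hA]
      nlinarith [opNorm_nonneg A, evnorm_nonneg k]
    calc |kt ⬝ᵥ (a - b)| ≤ evnorm kt * evnorm (a - b) := abs_dot_le kt (a - b)
      _ ≤ (evnorm k + Real.sqrt N * ε) * (evnorm a + evnorm b) := by
          apply mul_le_mul hnkt (evnorm_sub_le a b) (evnorm_nonneg _)
          linarith [evnorm_nonneg k]
      _ ≤ (Real.sqrt N * ε + evnorm k) * Cbound K k lam ε := by
          rw [add_comm (evnorm k)]
          apply mul_le_mul_of_nonneg_left hCb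
          linarith [evnorm_nonneg k]
  calc |(c - ct) + d ⬝ᵥ a - kt ⬝ᵥ (a - b)|
      ≤ |c - ct| + |d ⬝ᵥ a| + |kt ⬝ᵥ (a - b)| := habs
    _ ≤ Ssq K k lam ε := by
        simp only [Ssq, ← hA, ← ha]
        linarith
end

section
/- Let N be a positive integer, let K and K̃ be N×N real symmetric positive semidefinite matrices whose entries satisfy |K̃ᵢⱼ − Kᵢⱼ| ≤ ε̃ for all indices i, j, where ε̃ ≥ 0; let λ > 0; let k, k̃ ∈ ℝ^N satisfy |k̃ᵢ − kᵢ| ≤ ε̃ for every index i; let c, c̃ ∈ ℝ satisfy |c − c̃| ≤ ε̃; let y ∈ ℝ^N, let f ∈ ℝ, let B, R ≥ 0 and δ ∈ (0,1). Define μ := kᵀ(K + λI)⁻¹ y and μ̃ := k̃ᵀ(K̃ + λI)⁻¹ y, σ² := c − kᵀ(K + λI)⁻¹ k and σ̃² := c̃ − k̃ᵀ(K̃ + λI)⁻¹ k̃, β̃ := B + R·√(log det(K̃ + λI) − 2·log δ) and β̄ := B + R·√(log det(K + (N·ε̃ + λ)·I) − 2·log δ), C := (1/λ + ‖(K + λI)⁻¹‖)·(‖k‖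 + √N·ε̃) + ‖(K + λI)⁻¹‖·√N·ε̃, and S² := ε̃ + √N·ε̃·‖(K + λI)⁻¹ k‖ + (√N·ε̃ + ‖k‖)·C. Assume σ̃² ≥ 0 and log det(K̃ + λI) − 2·log δ ≥ 0. If |μ̃ − f| ≤ β̃·√(σ̃²), then |μ − f| ≤ β̄·√(σ² + S²) + C·‖y‖. -/
open Matrix MeasureTheory

namespace GPAux

variable {N : ℕ}

lemma evnorm_eq (v : Fin N → ℝ) :
    evnorm v = ‖(WithLp.equiv 2 (Fin N → ℝ)).symm v‖ := by
  rw [EuclideanSpace.norm_eq]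
  simp [evnorm, Real.norm_eq_abs, sq_abs]

lemma evnorm_nonneg (v : Fin N → ℝ) : 0 ≤ evnorm v := Real.sqrt_nonneg _

lemma sq_evnorm (v : Fin N → ℝ) : evnorm v ^ 2 = v ⬝ᵥ v := by
  rw [evnorm, Real.sq_sqrt (by positivity)]
  simp [dotProduct, pow_two]

lemma dot_le (u v : Fin N → ℝ) : u ⬝ᵥ v ≤ evnorm u * evnorm v := by
  have h := Finset.sum_mul_sq_le_sq_mul_sq Finset.univ u v
  have h2 : u ⬝ᵥ v ≤ Real.sqrt ((∑ i, u i ^ 2) * (∑ i, v i ^ 2)) := by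
    refine le_trans (le_abs_self _) ?_
    rw [← Real.sqrt_sq_eq_abs]
    exact Real.sqrt_le_sqrt (by simpa [dotProduct] using h)
  simpa [evnorm, Real.sqrt_mul (by positivity : (0:ℝ) ≤ ∑ i, u i ^ 2)] using h2

lemma abs_dot_le (u v : Fin N → ℝ) : |u ⬝ᵥ v| ≤ evnorm u * evnorm v := by
  rcases abs_cases (u ⬝ᵥ v) with ⟨h, _⟩ | ⟨h, _⟩
  · rw [h]; exact dot_le u v
  · rw [h]
    have h3 := dot_le (-u) v
    have h4 : evnorm (-u) = evnorm u := by simp [evnorm]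
    rw [h4] at h3
    simpa [neg_dotProduct] using h3

lemma evnorm_mulVec_le (M : Matrix (Fin N) (Fin N) ℝ) (v : Fin N → ℝ) :
    evnorm (M *ᵥ v) ≤ opNorm M * evnorm v := by
  rw [evnorm_eq, evnorm_eq, opNorm]
  have h : (WithLp.equiv 2 (Fin N → ℝ)).symm (M *ᵥ v)
      = Matrix.toEuclideanCLM (𝕜 := ℝ) M ((WithLp.equiv 2 (Fin N → ℝ)).symm v) := by
    rfl
  rw [h]
  exact (Matrix.toEuclideanCLM (𝕜 := ℝ) M).le_opNorm _

lemma herm_of_symm {M : Matrix (Fin N) (Fin N) ℝ} (h : M.IsSymm) : M.IsHermitian := by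
  rwa [Matrix.IsHermitian, Matrix.conjTranspose_eq_transpose_of_trivial]

lemma quad_nonneg {M : Matrix (Fin N) (Fin N) ℝ} (h : M.PosSemidef) (v : Fin N → ℝ) :
    0 ≤ v ⬝ᵥ M *ᵥ v := by simpa using h.dotProduct_mulVec_nonneg v

lemma symm_shift {M : Matrix (Fin N) (Fin N) ℝ} (hsym : M.IsSymm) (μ : ℝ) :
    (M + μ • 1).IsSymm := by
  rw [Matrix.IsSymm, Matrix.transpose_add, Matrix.transpose_smul, Matrix.transpose_one, hsym]

lemma dot_self_nonneg (v : Fin N → ℝ) : 0 ≤ v ⬝ᵥ v := by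
  simp only [dotProduct, ← pow_two]
  positivity

lemma quad_shift (M : Matrix (Fin N) (Fin N) ℝ) (μ : ℝ) (x : Fin N → ℝ) :
    x ⬝ᵥ (M + μ • 1) *ᵥ x = x ⬝ᵥ M *ᵥ x + μ * (x ⬝ᵥ x) := by
  rw [Matrix.add_mulVec, dotProduct_add, Matrix.smul_mulVec, Matrix.one_mulVec,
    dotProduct_smul, smul_eq_mul]

lemma posDef_shift {M : Matrix (Fin N) (Fin N) ℝ} (hsym : M.IsSymm)
    (h : ∀ v, 0 ≤ v ⬝ᵥ M *ᵥ v) {μ : ℝ} (hμ : 0 < μ) : (M + μ • 1).PosDef := by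
  refine Matrix.PosDef.of_dotProduct_mulVec_pos (herm_of_symm (symm_shift hsym μ)) fun x hx => ?_
  have h2 : 0 < x ⬝ᵥ x :=
    lt_of_le_of_ne (dot_self_nonneg x) (fun h0 => hx (dotProduct_self_eq_zero.mp h0.symm))
  have h3 := h x
  have h1 := quad_shift M μ x
  simp only [star_trivial]
  rw [h1]
  nlinarith

lemma inv_mulVec_evnorm_le {M : Matrix (Fin N) (Fin N) ℝ} (hsym : M.IsSymm)
    (h : ∀ v, 0 ≤ v ⬝ᵥ M *ᵥ v) {lam : ℝ} (hlam : 0 < lam) (y : Fin N → ℝ) :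
    evnorm ((M + lam • 1)⁻¹ *ᵥ y) ≤ (1 / lam) * evnorm y := by
  set w := (M + lam • 1)⁻¹ *ᵥ y with hw
  have hpd := posDef_shift hsym h hlam
  have hu : IsUnit (M + lam • 1).det := isUnit_iff_ne_zero.mpr (ne_of_gt hpd.det_pos)
  have hMy : (M + lam • 1) *ᵥ w = y := by
    rw [hw, Matrix.mulVec_mulVec, Matrix.mul_nonsing_inv _ hu, Matrix.one_mulVec]
  have key : lam * (w ⬝ᵥ w) ≤ w ⬝ᵥ y := by
    have h1 := quad_shift M lam w
    have h2 := h w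
    rw [← hMy, h1]
    linarith
  have h1 : lam * evnorm w ^ 2 ≤ evnorm w * evnorm y := by
    rw [sq_evnorm]
    exact le_trans key (dot_le w y)
  rcases eq_or_lt_of_le (evnorm_nonneg w) with h0 | h0
  · rw [← h0]
    exact mul_nonneg (by positivity) (evnorm_nonneg y)
  · have h2 : lam * evnorm w ≤ evnorm y := by nlinarith
    rw [one_div, ← div_eq_inv_mul]
    exact (le_div_iff₀ hlam).mpr (by linarith)

lemma abs_quad_le {D : Matrix (Fin N) (Fin N) ℝ} {ε : ℝ} (hε : 0 ≤ ε)
    (hD : ∀ i j, |D i j| ≤ ε)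
    (v : Fin N → ℝ) : |v ⬝ᵥ D *ᵥ v| ≤ N * ε * (v ⬝ᵥ v) := by
  have h1 : |v ⬝ᵥ D *ᵥ v| ≤ ∑ i, ∑ j, |v i| * |v j| * ε := by
    rw [dotProduct]
    refine le_trans (Finset.abs_sum_le_sum_abs _ _) (Finset.sum_le_sum fun i _ => ?_)
    have hDv : (D *ᵥ v) i = ∑ j, D i j * v j := rfl
    rw [abs_mul, hDv]
    calc |v i| * |∑ j, D i j * v j| ≤ |v i| * ∑ j, |D i j * v j| :=
          mul_le_mul_of_nonneg_left (Finset.abs_sum_le_sum_abs _ _) (abs_nonneg _)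
      _ = ∑ j, |v i| * |D i j * v j| := Finset.mul_sum _ _ _
      _ ≤ ∑ j, |v i| * |v j| * ε := Finset.sum_le_sum fun j _ => by
          rw [abs_mul]
          calc |v i| * (|D i j| * |v j|) ≤ |v i| * (ε * |v j|) :=
                mul_le_mul_of_nonneg_left
                  (mul_le_mul_of_nonneg_right (hD i j) (abs_nonneg _)) (abs_nonneg _)
            _ = |v i| * |v j| * ε := by ring
  have h2 : ∑ i, ∑ j : Fin N, |v i| * |v j| * ε = (∑ i, |v i|) ^ 2 * ε := by
    rw [pow_two, Finset.sum_mul_sum, Finset.sum_mul]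
    exact Finset.sum_congr rfl fun i _ => by rw [Finset.sum_mul]
  have h3 : (∑ i, |v i|) ^ 2 ≤ N * ∑ i, (v i) ^ 2 := by
    have h4 := Finset.sum_mul_sq_le_sq_mul_sq Finset.univ (fun _ : Fin N => (1:ℝ))
      (fun i => |v i|)
    simpa [sq_abs] using h4
  have h5 : v ⬝ᵥ v = ∑ i, (v i) ^ 2 := by simp [dotProduct, pow_two]
  calc |v ⬝ᵥ D *ᵥ v| ≤ (∑ i, |v i|) ^ 2 * ε := by rw [← h2]; exact h1
    _ ≤ (N * ∑ i, (v i) ^ 2) * ε := mul_le_mul_of_nonneg_right h3 hε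
    _ = N * ε * (v ⬝ᵥ v) := by rw [h5]; ring

lemma one_le_det_one_add {Q : Matrix (Fin N) (Fin N) ℝ} (hQ : Q.PosSemidef) :
    1 ≤ (1 + Q).det := by
  have h : (1 + Q).IsHermitian := Matrix.isHermitian_one.add hQ.1
  have hdet : (1 + Q).det = ∏ i, h.eigenvalues i := by
    simpa using h.det_eq_prod_eigenvalues
  rw [hdet]
  have hge : ∀ i, 1 ≤ h.eigenvalues i := ?_
  · calc (1:ℝ) = ∏ _i : Fin N, (1:ℝ) := by simp
      _ ≤ ∏ i, h.eigenvalues i :=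
        Finset.prod_le_prod (fun _ _ => zero_le_one) (fun i _ => hge i)
  intro i
  have hv := h.eigenvalues_eq i
  set v : Fin N → ℝ := ⇑(h.eigenvectorBasis i) with hvdef
  have hnorm : ‖h.eigenvectorBasis i‖ = 1 := h.eigenvectorBasis.orthonormal.1 i
  have hvv : v ⬝ᵥ v = 1 := by
    have h2 : ‖h.eigenvectorBasis i‖ ^ 2 = v ⬝ᵥ v := by
      rw [EuclideanSpace.norm_eq, Real.sq_sqrt (by positivity)]
      simp only [Real.norm_eq_abs, sq_abs, dotProduct, ← pow_two]
      rfl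
    rw [← h2, hnorm]; norm_num
  have hQv : 0 ≤ v ⬝ᵥ Q *ᵥ v := quad_nonneg hQ v
  have heig : h.eigenvalues i = v ⬝ᵥ v + v ⬝ᵥ Q *ᵥ v := by
    simpa [Matrix.add_mulVec, Matrix.one_mulVec, dotProduct_add] using hv
  rw [heig, hvv]
  linarith

open scoped MatrixOrder in
lemma det_le_det_add {M P : Matrix (Fin N) (Fin N) ℝ} (hM : M.PosDef) (hP : P.PosSemidef) :
    M.det ≤ (M + P).det := by
  have hMps := hM.posSemidef
  set S := CFC.sqrt M with hSdef
  have hS : S.PosSemidef := (CFC.sqrt_nonneg M).posSemidef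
  have hSS : S * S = M := CFC.sqrt_mul_sqrt_self M hMps.nonneg
  have hdetM : 0 < M.det := hM.det_pos
  have hdetSS : S.det * S.det = M.det := by rw [← Matrix.det_mul, hSS]
  have hdetS : S.det ≠ 0 := by
    intro h0
    rw [h0, mul_zero] at hdetSS
    exact absurd hdetSS.symm (ne_of_gt hdetM)
  have hSu : IsUnit S.det := isUnit_iff_ne_zero.mpr hdetS
  set Q := S⁻¹ * P * S⁻¹ with hQdef
  have hQ : Q.PosSemidef := by
    have h2 := hP.conjTranspose_mul_mul_same S⁻¹
    rwa [hS.1.inv] at h2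
  have hq : S * (S⁻¹ * P * S⁻¹) * S = P := by
    calc S * (S⁻¹ * P * S⁻¹) * S = S * S⁻¹ * P * (S⁻¹ * S) := by
          simp only [Matrix.mul_assoc]
      _ = P := by
          rw [Matrix.mul_nonsing_inv _ hSu, Matrix.nonsing_inv_mul _ hSu, Matrix.one_mul,
            Matrix.mul_one]
  have hdecomp : M + P = S * (1 + Q) * S := by
    rw [hQdef, Matrix.mul_add, Matrix.mul_one, Matrix.add_mul, hSS, hq]
  have h1 : 1 ≤ (1 + Q).det := one_le_det_one_add hQ
  have h2 : (M + P).det = M.det * (1 + Q).det := by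
    rw [hdecomp, Matrix.det_mul, Matrix.det_mul, ← hdetSS]
    ring
  rw [h2]
  nlinarith

lemma evnorm_le_of_abs {v : Fin N → ℝ} {ε : ℝ} (hε : 0 ≤ ε) (h : ∀ i, |v i| ≤ ε) :
    evnorm v ≤ Real.sqrt N * ε := by
  rw [evnorm, ← Real.sqrt_sq hε, ← Real.sqrt_mul (by positivity)]
  refine Real.sqrt_le_sqrt ?_
  calc ∑ i, (v i) ^ 2 ≤ ∑ _i : Fin N, ε ^ 2 := Finset.sum_le_sum fun i _ => by
        rw [← sq_abs]
        exact pow_le_pow_left₀ (abs_nonneg _) (h i) 2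
    _ = N * ε ^ 2 := by simp [Finset.card_univ]

lemma evnorm_triangle (u v : Fin N → ℝ) : evnorm (u + v) ≤ evnorm u + evnorm v := by
  rw [evnorm_eq, evnorm_eq, evnorm_eq]
  exact norm_add_le _ _

end GPAux

set_option maxHeartbeats 2000000 in
theorem stmt_10 {N : ℕ} (hN : 0 < N) (K Kt : Matrix (Fin N) (Fin N) ℝ)
    (hKsymm : K.IsSymm) (hKtsymm : Kt.IsSymm)
    (hKpsd : ∀ v : Fin N → ℝ, 0 ≤ v ⬝ᵥ K *ᵥ v)
    (hKtpsd : ∀ v : Fin N → ℝ, 0 ≤ v ⬝ᵥ Kt *ᵥ v)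
    (ε : ℝ) (hε : 0 ≤ ε) (hentry : ∀ i j, |Kt i j - K i j| ≤ ε)
    (lam : ℝ) (hlam : 0 < lam)
    (k kt : Fin N → ℝ) (hk : ∀ i, |kt i - k i| ≤ ε)
    (c ct : ℝ) (hc : |c - ct| ≤ ε)
    (y : Fin N → ℝ) (f : ℝ) (B R : ℝ) (hB : 0 ≤ B) (hR : 0 ≤ R)
    (δ : ℝ) (hδ : δ ∈ Set.Ioo (0 : ℝ) 1)
    (hvar : 0 ≤ ct - kt ⬝ᵥ ((Kt + lam • 1)⁻¹ *ᵥ kt))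
    (hlog : 0 ≤ Real.log (Kt + lam • 1).det - 2 * Real.log δ)
    (hbound : |kt ⬝ᵥ ((Kt + lam • 1)⁻¹ *ᵥ y) - f| ≤
      (B + R * Real.sqrt (Real.log (Kt + lam • 1).det - 2 * Real.log δ)) *
        Real.sqrt (ct - kt ⬝ᵥ ((Kt + lam • 1)⁻¹ *ᵥ kt))) :
    |k ⬝ᵥ ((K + lam • 1)⁻¹ *ᵥ y) - f| ≤
      (B + R * Real.sqrt (Real.log (K + (N * ε + lam) • 1).det - 2 * Real.log δ)) *
          Real.sqrt ((c - k ⬝ᵥ ((K + lam • 1)⁻¹ *ᵥ k)) + Ssq K k lam ε) +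
        Cbound K k lam ε * evnorm y := by
  have hInv : (0:ℝ) ≤ opNorm (K + lam • 1)⁻¹ := norm_nonneg _
  have hnk := GPAux.evnorm_nonneg k
  have hny := GPAux.evnorm_nonneg y
  have he : (0:ℝ) ≤ Real.sqrt N * ε := mul_nonneg (Real.sqrt_nonneg _) hε
  have hilam : (0:ℝ) ≤ 1 / lam := by positivity
  have hC : Cbound K k lam ε = (1/lam + opNorm (K + lam • 1)⁻¹) *
      (evnorm k + Real.sqrt N * ε) + opNorm (K + lam • 1)⁻¹ * (Real.sqrt N * ε) := rfl
  -- bound on |μ|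
  have hmu : |k ⬝ᵥ ((K + lam • 1)⁻¹ *ᵥ y)| ≤
      evnorm k * (opNorm (K + lam • 1)⁻¹ * evnorm y) :=
    (GPAux.abs_dot_le _ _).trans
      (mul_le_mul_of_nonneg_left (GPAux.evnorm_mulVec_le _ _) hnk)
  -- bound on |μ̃|
  have hktn : evnorm kt ≤ evnorm k + Real.sqrt N * ε := by
    have h1 : evnorm (kt - k) ≤ Real.sqrt N * ε :=
      GPAux.evnorm_le_of_abs hε hk
    calc evnorm kt = evnorm (k + (kt - k)) := by rw [add_sub_cancel]
      _ ≤ evnorm k + evnorm (kt - k) := GPAux.evnorm_triangle _ _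
      _ ≤ _ := by linarith
  have hinvy : evnorm ((Kt + lam • 1)⁻¹ *ᵥ y) ≤ (1/lam) * evnorm y :=
    GPAux.inv_mulVec_evnorm_le hKtsymm hKtpsd hlam y
  have hmut : |kt ⬝ᵥ ((Kt + lam • 1)⁻¹ *ᵥ y)| ≤
      (evnorm k + Real.sqrt N * ε) * ((1/lam) * evnorm y) :=
    (GPAux.abs_dot_le _ _).trans
      (mul_le_mul hktn hinvy (GPAux.evnorm_nonneg _) (by linarith))
  -- β̃ ≤ β̄
  have hpdKt : (Kt + lam • 1).PosDef := GPAux.posDef_shift hKtsymm hKtpsd hlam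
  have hdetmono : (Kt + lam • 1).det ≤ (K + (N * ε + lam) • 1).det := by
    have hP : ((K - Kt) + ((N : ℝ) * ε) • 1).PosSemidef := by
      refine Matrix.PosSemidef.of_dotProduct_mulVec_nonneg (GPAux.herm_of_symm ?_) fun x => ?_
      · rw [Matrix.IsSymm, Matrix.transpose_add, Matrix.transpose_sub, Matrix.transpose_smul,
          Matrix.transpose_one, hKsymm, hKtsymm]
      · have habs := GPAux.abs_quad_le hε
          (fun i j => by simpa [Matrix.sub_apply, abs_sub_comm] using hentry i j) x
        have hqs := GPAux.quad_shift (K - Kt) ((N : ℝ) * ε) x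
        have h2 : -((N : ℝ) * ε * (x ⬝ᵥ x)) ≤ x ⬝ᵥ (K - Kt) *ᵥ x := (abs_le.mp habs).1
        simp only [star_trivial]
        rw [hqs]
        linarith
    have heq : (Kt + lam • 1) + ((K - Kt) + ((N : ℝ) * ε) • 1) =
        K + ((N : ℝ) * ε + lam) • 1 := by
      rw [add_smul]
      abel
    calc (Kt + lam • 1).det ≤ ((Kt + lam • 1) + ((K - Kt) + ((N : ℝ) * ε) • 1)).det :=
          GPAux.det_le_det_add hpdKt hP
      _ = _ := by rw [heq]
  have hlogmono : Real.log (Kt + lam • 1).det ≤ Real.log (K + ((N : ℝ) * ε + lam) • 1).det :=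
    Real.log_le_log hpdKt.det_pos hdetmono
  have hbeta : B + R * Real.sqrt (Real.log (Kt + lam • 1).det - 2 * Real.log δ) ≤
      B + R * Real.sqrt (Real.log (K + ((N : ℝ) * ε + lam) • 1).det - 2 * Real.log δ) :=
    add_le_add_right (mul_le_mul_of_nonneg_left
      (Real.sqrt_le_sqrt (by linarith)) hR) B
  -- variance comparison
  have hq0 : 0 ≤ kt ⬝ᵥ ((Kt + lam • 1)⁻¹ *ᵥ kt) :=
    GPAux.quad_nonneg hpdKt.inv.posSemidef kt
  have hsig : ct - kt ⬝ᵥ ((Kt + lam • 1)⁻¹ *ᵥ kt) ≤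
      (c - k ⬝ᵥ ((K + lam • 1)⁻¹ *ᵥ k)) + Ssq K k lam ε := by
    have hct : ct ≤ c + ε := by have := abs_le.mp hc; linarith
    have hm : evnorm ((K + lam • 1)⁻¹ *ᵥ k) ≤ opNorm (K + lam • 1)⁻¹ * evnorm k :=
      GPAux.evnorm_mulVec_le _ _
    have hq : k ⬝ᵥ ((K + lam • 1)⁻¹ *ᵥ k) ≤ evnorm k * evnorm ((K + lam • 1)⁻¹ *ᵥ k) :=
      GPAux.dot_le _ _
    have hm0 := GPAux.evnorm_nonneg ((K + lam • 1)⁻¹ *ᵥ k)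
    have hCge : opNorm (K + lam • 1)⁻¹ * (evnorm k + Real.sqrt N * ε) ≤ Cbound K k lam ε := by
      rw [hC]; nlinarith
    have hC0 : 0 ≤ Cbound K k lam ε :=
      le_trans (mul_nonneg hInv (by linarith)) hCge
    have hmC : evnorm ((K + lam • 1)⁻¹ *ᵥ k) ≤ Cbound K k lam ε :=
      hm.trans (le_trans (mul_le_mul_of_nonneg_left (by linarith) hInv) hCge)
    have hSsq : Ssq K k lam ε = ε + Real.sqrt N * ε * evnorm ((K + lam • 1)⁻¹ *ᵥ k) +
        (Real.sqrt N * ε + evnorm k) * Cbound K k lam ε := rfl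
    rw [hSsq]
    nlinarith [mul_nonneg hnk (sub_nonneg.mpr hmC), mul_nonneg he hC0,
      mul_nonneg he hm0]
  -- combine sqrt bounds
  have hb2 : (B + R * Real.sqrt (Real.log (Kt + lam • 1).det - 2 * Real.log δ)) *
      Real.sqrt (ct - kt ⬝ᵥ ((Kt + lam • 1)⁻¹ *ᵥ kt)) ≤
      (B + R * Real.sqrt (Real.log (K + ((N : ℝ) * ε + lam) • 1).det - 2 * Real.log δ)) *
      Real.sqrt ((c - k ⬝ᵥ ((K + lam • 1)⁻¹ *ᵥ k)) + Ssq K k lam ε) :=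
    mul_le_mul hbeta (Real.sqrt_le_sqrt hsig) (Real.sqrt_nonneg _)
      (add_nonneg hB (mul_nonneg hR (Real.sqrt_nonneg _)))
  -- triangle inequality
  have htri : |k ⬝ᵥ ((K + lam • 1)⁻¹ *ᵥ y) - f| ≤
      |k ⬝ᵥ ((K + lam • 1)⁻¹ *ᵥ y)| + |kt ⬝ᵥ ((Kt + lam • 1)⁻¹ *ᵥ y)| +
      |kt ⬝ᵥ ((Kt + lam • 1)⁻¹ *ᵥ y) - f| := by
    set a := k ⬝ᵥ ((K + lam • 1)⁻¹ *ᵥ y)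
    set b := kt ⬝ᵥ ((Kt + lam • 1)⁻¹ *ᵥ y)
    have h1 : a - f = (a - b) + (b - f) := by ring
    calc |a - f| = |(a - b) + (b - f)| := by rw [← h1]
      _ ≤ |a - b| + |b - f| := abs_add_le _ _
      _ ≤ (|a| + |b|) + |b - f| := by
          have h2 : |a - b| ≤ |a| + |b| := by
            calc |a - b| = |a + -b| := by rw [sub_eq_add_neg]
              _ ≤ |a| + |-b| := abs_add_le _ _
              _ = |a| + |b| := by rw [abs_neg]
          linarith
  -- coefficient comparison
  have hcoef : evnorm k * (opNorm (K + lam • 1)⁻¹ * evnorm y) +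
      (evnorm k + Real.sqrt N * ε) * ((1/lam) * evnorm y) ≤
      Cbound K k lam ε * evnorm y := by
    rw [hC]; nlinarith [mul_nonneg (mul_nonneg hInv he) hny]
  linarith [htri, hmu, hmut, hbound, hb2, hcoef]
end
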